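/- Let h(t1,t2) = ((t1−π)(t2−(1−π))/(t1+t2−1)²) · [ (p22−p12) + (p11−2p12+p22)(t1(t1+t2−1) − (t1+t2)/2) + (1/2)(p11−p22)(t1+t2) ] be defined on D = ([0,π]×[0,1−π] ∪ [π,1]×[1−π,1]) minus the line t1+t2 = 1. Suppose 0 < π < 1, p11 > p12, p11 > p22, and p11 + p22 > 2p12. Then h(t1,t2) < h(1,1) = π(1−π)(p11−p12) for all (t1,t2) ∈ D with (t1,t2) ≠ (1,1). -/
import Mathlib


set_option maxHeartbeats 1600000 in
/-- The population version of the adjusted criterion is strictly below its value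
π(1-π)(p11-p12) at (1,1), on the feasible region off the line t1+t2 = 1. -/
theorem stmt_8 (π p11 p12 p22 : ℝ)
    (hπ : 0 < π) (hπ1 : π < 1)
    (h1 : p11 > p12) (h2 : p11 > p22) (h3 : p11 + p22 > 2 * p12)
    (h : ℝ → ℝ → ℝ)
    (hh : ∀ t1 t2, h t1 t2 =
      ((t1 - π) * (t2 - (1 - π)) / (t1 + t2 - 1) ^ 2) *
        ((p22 - p12)
          + (p11 - 2 * p12 + p22) * (t1 * (t1 + t2 - 1) - (t1 + t2) / 2)
          + (1 / 2) * (p11 - p22) * (t1 + t2))) :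
    h 1 1 = π * (1 - π) * (p11 - p12) ∧
    ∀ t1 t2 : ℝ,
      ((t1 ∈ Set.Icc (0:ℝ) π ∧ t2 ∈ Set.Icc (0:ℝ) (1 - π)) ∨
        (t1 ∈ Set.Icc π 1 ∧ t2 ∈ Set.Icc (1 - π) 1)) →
      t1 + t2 ≠ 1 →
      (t1, t2) ≠ ((1:ℝ), (1:ℝ)) →
      h t1 t2 < π * (1 - π) * (p11 - p12) := by
  have hA : 0 < p11 - 2 * p12 + p22 := by linarith
  have hK : 0 < p11 - p12 := by linarith
  have h1π : 0 < 1 - π := by linarith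
  constructor
  · rw [hh]; ring
  · intro t1 t2 hmem hs hne
    have hs0 : t1 + t2 - 1 ≠ 0 := sub_ne_zero.mpr hs
    have hform : h t1 t2 =
        (t1 - π) * (t2 - (1 - π)) * ((p11 - 2 * p12 + p22) * t1 + p12 - p22)
          / (t1 + t2 - 1) := by
      rw [hh]
      field_simp
      ring
    rw [hform]
    set C : ℝ := (p11 - 2 * p12 + p22) * t1 + p12 - p22 with hC
    rcases hmem with ⟨⟨h1a, h1b⟩, ⟨h2a, h2b⟩⟩ | ⟨⟨h1a, h1b⟩, ⟨h2a, h2b⟩⟩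
    · -- lower box: t1 ∈ [0, π], t2 ∈ [0, 1-π], so t1+t2-1 < 0
      have hslt : t1 + t2 - 1 < 0 := by
        rcases lt_or_eq_of_le (by linarith : t1 + t2 ≤ 1) with hlt | heq
        · linarith
        · exact absurd heq hs
      rw [div_lt_iff_of_neg hslt]
      -- goal: π * (1-π) * (p11-p12) * (t1+t2-1) < (t1-π)*(t2-(1-π))*C
      have hab : 0 < (π - t1) + ((1 - π) - t2) := by linarith
      have key : (π - t1) * ((1 - π) - t2) ≤ π * (1 - π) * ((π - t1) + ((1 - π) - t2)) := by
        nlinarith [mul_nonneg (mul_nonneg (by linarith : (0:ℝ) ≤ π - t1) hπ.le)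
            (by linarith : (0:ℝ) ≤ (1 - π) - ((1 - π) - t2)),
          mul_nonneg (mul_nonneg (by linarith : (0:ℝ) ≤ (1 - π) - t2) h1π.le)
            (by linarith : (0:ℝ) ≤ π - (π - t1))]
      rcases le_or_gt 0 C with hCpos | hCneg
      · have h5 : 0 ≤ (π - t1) * ((1 - π) - t2) * C :=
          mul_nonneg (mul_nonneg (by linarith) (by linarith)) hCpos
        nlinarith [mul_pos (mul_pos (mul_pos hπ h1π) hK) hab]
      · have h5 : (π - t1) * ((1 - π) - t2) * (-C) ≤
            π * (1 - π) * ((π - t1) + ((1 - π) - t2)) * (-C) :=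
          mul_le_mul_of_nonneg_right key (by linarith)
        have h6 : -C ≤ p22 - p12 := by
          have : 0 ≤ (p11 - 2 * p12 + p22) * t1 := mul_nonneg hA.le h1a
          simp only [hC]; linarith
        have hPQab : 0 < π * (1 - π) * ((π - t1) + ((1 - π) - t2)) :=
          mul_pos (mul_pos hπ h1π) hab
        have h7 : π * (1 - π) * ((π - t1) + ((1 - π) - t2)) * (-C) ≤
            π * (1 - π) * ((π - t1) + ((1 - π) - t2)) * (p22 - p12) :=
          mul_le_mul_of_nonneg_left h6 hPQab.le
        have h8 : π * (1 - π) * ((π - t1) + ((1 - π) - t2)) * (p22 - p12) <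
            π * (1 - π) * ((π - t1) + ((1 - π) - t2)) * (p11 - p12) :=
          mul_lt_mul_of_pos_left (by linarith) hPQab
        nlinarith [h5, h7, h8]
    · -- upper box: t1 ∈ [π, 1], t2 ∈ [1-π, 1], so t1+t2-1 > 0
      have hsgt : 0 < t1 + t2 - 1 := by
        rcases lt_or_eq_of_le (by linarith : 1 ≤ t1 + t2) with hlt | heq
        · linarith
        · exact absurd heq.symm hs
      rw [div_lt_iff₀ hsgt]
      have key : (t1 - π) * (t2 - (1 - π)) ≤ π * (1 - π) * (t1 + t2 - 1) := by
        nlinarith [mul_nonneg (mul_nonneg (by linarith : (0:ℝ) ≤ t1 - π) h1π.le)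
            (by linarith : (0:ℝ) ≤ π - (t2 - (1 - π))),
          mul_nonneg (mul_nonneg (by linarith : (0:ℝ) ≤ t2 - (1 - π)) hπ.le)
            (by linarith : (0:ℝ) ≤ (1 - π) - (t1 - π))]
      have hne' : t1 ≠ 1 ∨ t2 ≠ 1 := by
        by_contra hcon
        push_neg at hcon
        exact hne (by rw [hcon.1, hcon.2])
      rcases hne' with ht1 | ht2
      · have ht1lt : t1 < 1 := lt_of_le_of_ne h1b ht1
        have hCK : C < p11 - p12 := by
          have : (p11 - 2 * p12 + p22) * t1 < (p11 - 2 * p12 + p22) * 1 :=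
            mul_lt_mul_of_pos_left ht1lt hA
          simp only [hC]; linarith
        rcases le_or_gt C 0 with hCneg | hCpos
        · have h5 : (t1 - π) * (t2 - (1 - π)) * C ≤ 0 :=
            mul_nonpos_of_nonneg_of_nonpos (mul_nonneg (by linarith) (by linarith)) hCneg
          nlinarith [mul_pos (mul_pos (mul_pos hπ h1π) hK) hsgt]
        · have h5 : (t1 - π) * (t2 - (1 - π)) * C ≤ π * (1 - π) * (t1 + t2 - 1) * C :=
            mul_le_mul_of_nonneg_right key hCpos.le
          have hPQab : 0 < π * (1 - π) * (t1 + t2 - 1) := mul_pos (mul_pos hπ h1π) hsgt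
          have h8 : π * (1 - π) * (t1 + t2 - 1) * C <
              π * (1 - π) * (t1 + t2 - 1) * (p11 - p12) :=
            mul_lt_mul_of_pos_left hCK hPQab
          nlinarith [h5, h8]
      · rcases eq_or_lt_of_le h1b with ht1eq | ht1lt
        · -- t1 = 1, t2 < 1
          have ht2lt : t2 < 1 := lt_of_le_of_ne h2b ht2
          subst ht1eq
          have hCeq : C = p11 - p12 := by simp only [hC]; ring
          rw [hCeq]
          nlinarith [mul_pos (mul_pos (mul_pos h1π h1π) hK) (by linarith : (0:ℝ) < 1 - t2)]
        · -- t1 < 1: same as previous case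
          have hCK : C < p11 - p12 := by
            have : (p11 - 2 * p12 + p22) * t1 < (p11 - 2 * p12 + p22) * 1 :=
              mul_lt_mul_of_pos_left ht1lt hA
            simp only [hC]; linarith
          rcases le_or_gt C 0 with hCneg | hCpos
          · have h5 : (t1 - π) * (t2 - (1 - π)) * C ≤ 0 :=
              mul_nonpos_of_nonneg_of_nonpos (mul_nonneg (by linarith) (by linarith)) hCneg
            nlinarith [mul_pos (mul_pos (mul_pos hπ h1π) hK) hsgt]
          · have h5 : (t1 - π) * (t2 - (1 - π)) * C ≤ π * (1 - π) * (t1 + t2 - 1) * C :=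
              mul_le_mul_of_nonneg_right key hCpos.le
            have hPQab : 0 < π * (1 - π) * (t1 + t2 - 1) := mul_pos (mul_pos hπ h1π) hsgt
            have h8 : π * (1 - π) * (t1 + t2 - 1) * C <
                π * (1 - π) * (t1 + t2 - 1) * (p11 - p12) :=
              mul_lt_mul_of_pos_left hCK hPQab
            nlinarith [h5, h8]
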